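/- Let Φ be the CDF of the normal distribution with mean μ and standard deviation σ > 0, and let f be its density. For all x > x₂, where x₂ is the largest real root of (x-μ)⁴ + 2σ²(x-μ)² - σ⁴ = 0 (namely x₂ = μ + σ√(√2 - 1)), the following upper bound holds: 1 - Φ(x) ≤ f(x) · σ² (x-μ)(σ² + (x-μ)²) / (-σ⁴ + 2σ²(x-μ)² + (x-μ)⁴) · (1/σ), i.e., 1 - Φ(x) ≤ (σ (x-μ)(σ² + (x-μ)²) / (√(2π)(-σ⁴ + 2σ²(x-μ)² + (x-μ)⁴))) · e^{-(x-μ)²/(2σ²)}. -/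

import Mathlib

open MeasureTheory Set Filter

lemma stmt_17_deriv (μ σ c : ℝ) (hσ : σ ≠ 0) (hc : c ≠ 0) (y : ℝ)
    (hD : -σ ^ 4 + 2 * σ ^ 2 * (y - μ) ^ 2 + (y - μ) ^ 4 ≠ 0) :
    HasDerivAt (fun z => σ * (z - μ) * (σ ^ 2 + (z - μ) ^ 2) /
        (c * (-σ ^ 4 + 2 * σ ^ 2 * (z - μ) ^ 2 + (z - μ) ^ 4)) *
        Real.exp (-(z - μ) ^ 2 / (2 * σ ^ 2)))
      (-8 * σ ^ 5 * (y - μ) ^ 2 * Real.exp (-(y - μ) ^ 2 / (2 * σ ^ 2)) /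
          (c * (-σ ^ 4 + 2 * σ ^ 2 * (y - μ) ^ 2 + (y - μ) ^ 4) ^ 2)
        - 1 / (σ * c) * Real.exp (-(y - μ) ^ 2 / (2 * σ ^ 2))) y := by
  have ht : HasDerivAt (fun z : ℝ => z - μ) 1 y := (hasDerivAt_id y).sub_const μ
  have hN : HasDerivAt (fun z => σ * (z - μ) * (σ ^ 2 + (z - μ) ^ 2))
      (σ * 1 * (σ ^ 2 + (y - μ) ^ 2) + σ * (y - μ) * (2 * (y - μ) ^ 1 * 1)) y :=
    (ht.const_mul σ).mul ((ht.pow 2).const_add (σ ^ 2))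
  have hDD : HasDerivAt (fun z => c * (-σ ^ 4 + 2 * σ ^ 2 * (z - μ) ^ 2 + (z - μ) ^ 4))
      (c * (2 * σ ^ 2 * (2 * (y - μ) ^ 1 * 1) + 4 * (y - μ) ^ 3 * 1)) y :=
    ((((ht.pow 2).const_mul (2 * σ ^ 2)).const_add (-σ ^ 4)).add (ht.pow 4)).const_mul c
  have hE : HasDerivAt (fun z => Real.exp (-(z - μ) ^ 2 / (2 * σ ^ 2)))
      (Real.exp (-(y - μ) ^ 2 / (2 * σ ^ 2)) * (-(2 * (y - μ) ^ 1 * 1) / (2 * σ ^ 2))) y :=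
    ((ht.pow 2).neg.div_const (2 * σ ^ 2)).exp
  have hcD : c * (-σ ^ 4 + 2 * σ ^ 2 * (y - μ) ^ 2 + (y - μ) ^ 4) ≠ 0 := mul_ne_zero hc hD
  have := (hN.div hDD hcD).mul hE
  refine this.congr_deriv ?_
  have hE0 : Real.exp (-(y - μ) ^ 2 / (2 * σ ^ 2)) ≠ 0 := (Real.exp_pos _).ne'
  simp only [Pi.div_apply]
  have hD' : σ ^ 2 * (-σ ^ 2 + (y - μ) ^ 2 * 2) + (y - μ) ^ 4 ≠ 0 := by
    convert hD using 1; ring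
  field_simp
  ring

theorem stmt_17 (μ σ : ℝ) (hσ : 0 < σ) :
    ∀ x : ℝ, μ + σ * Real.sqrt (Real.sqrt 2 - 1) < x →
      1 - (∫ t in Iic x,
            (1 / (σ * Real.sqrt (2 * Real.pi))) * Real.exp (-(t - μ) ^ 2 / (2 * σ ^ 2)))
        ≤ (σ * (x - μ) * (σ ^ 2 + (x - μ) ^ 2) /
            (Real.sqrt (2 * Real.pi) *
              (-σ ^ 4 + 2 * σ ^ 2 * (x - μ) ^ 2 + (x - μ) ^ 4))) *
          Real.exp (-(x - μ) ^ 2 / (2 * σ ^ 2)) := by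
  intro x hx
  have hπ : 0 < Real.pi := Real.pi_pos
  set c : ℝ := Real.sqrt (2 * Real.pi) with hcdef
  have hc0 : 0 < c := Real.sqrt_pos.mpr (by positivity)
  set f : ℝ → ℝ := fun t => 1 / (σ * c) * Real.exp (-(t - μ) ^ 2 / (2 * σ ^ 2)) with hfdef
  have hb : 0 < (2 * σ ^ 2)⁻¹ := by positivity
  have hfeq : f = fun t => 1 / (σ * c) * Real.exp (-(2 * σ ^ 2)⁻¹ * (t - μ) ^ 2) := by
    funext t
    rw [hfdef]
    exact congrArg (fun u => 1 / (σ * c) * Real.exp u) (by field_simp)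
  have hfc : Continuous f := by
    rw [hfeq]; fun_prop
  have hint : Integrable f := by
    rw [hfeq]
    exact ((integrable_exp_neg_mul_sq hb).comp_sub_right μ).const_mul _
  -- total integral equals 1
  have htot : ∫ t, f t = 1 := by
    rw [hfeq, MeasureTheory.integral_const_mul]
    have := MeasureTheory.integral_sub_right_eq_self (μ := (volume : Measure ℝ))
      (fun t : ℝ => Real.exp (-(2 * σ ^ 2)⁻¹ * t ^ 2)) μ
    rw [this, integral_gaussian]
    rw [show Real.pi / (2 * σ ^ 2)⁻¹ = (2 * Real.pi) * σ ^ 2 by field_simp,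
      Real.sqrt_mul (by positivity), Real.sqrt_sq hσ.le, ← hcdef]
    field_simp
  -- sqrt facts
  have h2 : (Real.sqrt 2) ^ 2 = 2 := Real.sq_sqrt (by norm_num)
  have h2n : 0 ≤ Real.sqrt 2 := Real.sqrt_nonneg 2
  have h21 : (1 : ℝ) ≤ Real.sqrt 2 := by nlinarith
  have hr2 : (Real.sqrt (Real.sqrt 2 - 1)) ^ 2 = Real.sqrt 2 - 1 :=
    Real.sq_sqrt (by linarith)
  have hrn : 0 ≤ Real.sqrt (Real.sqrt 2 - 1) := Real.sqrt_nonneg _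
  have hxμ : 0 < x - μ := by nlinarith [mul_nonneg hσ.le hrn]
  have hDpos : ∀ y : ℝ, x ≤ y → 0 < -σ ^ 4 + 2 * σ ^ 2 * (y - μ) ^ 2 + (y - μ) ^ 4 := by
    intro y hy
    have hty : σ * Real.sqrt (Real.sqrt 2 - 1) < y - μ := by linarith
    have h0 : 0 ≤ σ * Real.sqrt (Real.sqrt 2 - 1) := mul_nonneg hσ.le hrn
    have hty2 : σ ^ 2 * (Real.sqrt 2 - 1) < (y - μ) ^ 2 := by nlinarith
    have ha0 : (0:ℝ) ≤ σ ^ 2 * (Real.sqrt 2 - 1) := by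
      apply mul_nonneg (sq_nonneg σ); linarith
    have h4 : (σ ^ 2 * (Real.sqrt 2 - 1)) ^ 2 < ((y - μ) ^ 2) ^ 2 :=
      pow_lt_pow_left₀ hty2 ha0 two_ne_zero
    have h5 : 2 * σ ^ 2 * (σ ^ 2 * (Real.sqrt 2 - 1)) < 2 * σ ^ 2 * (y - μ) ^ 2 :=
      mul_lt_mul_of_pos_left hty2 (by positivity)
    have h6 : (Real.sqrt 2) ^ 2 * σ ^ 4 = 2 * σ ^ 4 := by rw [h2]
    nlinarith [h4, h5, h6]
  -- B and F
  set B : ℝ → ℝ := fun z => σ * (z - μ) * (σ ^ 2 + (z - μ) ^ 2) /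
      (c * (-σ ^ 4 + 2 * σ ^ 2 * (z - μ) ^ 2 + (z - μ) ^ 4)) *
      Real.exp (-(z - μ) ^ 2 / (2 * σ ^ 2)) with hBdef
  set F : ℝ → ℝ := fun y => B y + ∫ t in x..y, f t with hFdef
  have hFderiv : ∀ y ∈ Ici x, HasDerivAt F
      (-8 * σ ^ 5 * (y - μ) ^ 2 * Real.exp (-(y - μ) ^ 2 / (2 * σ ^ 2)) /
        (c * (-σ ^ 4 + 2 * σ ^ 2 * (y - μ) ^ 2 + (y - μ) ^ 4) ^ 2)) y := by
    intro y hy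
    have hB := stmt_17_deriv μ σ c hσ.ne' hc0.ne' y (hDpos y hy).ne'
    have hG : HasDerivAt (fun u => ∫ t in x..u, f t) (f y) y :=
      intervalIntegral.integral_hasDerivAt_right (hint.intervalIntegrable)
        (hfc.stronglyMeasurableAtFilter _ _) hfc.continuousAt
    have := hB.add hG
    refine this.congr_deriv ?_
    rw [hfdef]
    ring
  have hanti : AntitoneOn F (Ici x) := by
    apply antitoneOn_of_deriv_nonpos (convex_Ici x)
    · exact fun y hy => ((hFderiv y hy).continuousAt).continuousWithinAt
    · intro y hy
      rw [interior_Ici] at hy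
      exact (hFderiv y (le_of_lt (mem_Ioi.mp hy) : x ≤ y)).differentiableAt.differentiableWithinAt
    · intro y hy
      rw [interior_Ici] at hy
      rw [(hFderiv y (le_of_lt (mem_Ioi.mp hy) : x ≤ y)).deriv]
      apply div_nonpos_of_nonpos_of_nonneg
      · nlinarith [Real.exp_pos (-(y - μ) ^ 2 / (2 * σ ^ 2)), pow_pos hσ 5,
          sq_nonneg (y - μ), mul_pos (pow_pos hσ 5) (Real.exp_pos (-(y - μ) ^ 2 / (2 * σ ^ 2)))]
      · positivity
  have hBnn : ∀ y : ℝ, x ≤ y → 0 ≤ B y := by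
    intro y hy
    have h1 : 0 < y - μ := by linarith
    have := hDpos y hy
    rw [hBdef]
    have : (0:ℝ) ≤ σ * (y - μ) * (σ ^ 2 + (y - μ) ^ 2) /
        (c * (-σ ^ 4 + 2 * σ ^ 2 * (y - μ) ^ 2 + (y - μ) ^ 4)) := by positivity
    exact mul_nonneg this (Real.exp_pos _).le
  have key : ∀ y : ℝ, x ≤ y → (∫ t in x..y, f t) ≤ B x := by
    intro y hy
    have h1 : F y ≤ F x := hanti (Set.self_mem_Ici) hy hy
    have h2 : F x = B x := by
      simp [hFdef]
    have h3 : F y = B y + ∫ t in x..y, f t := rfl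
    have := hBnn y hy
    rw [h2, h3] at h1
    linarith
  have htend : Tendsto (fun y => ∫ t in x..y, f t) atTop (nhds (∫ t in Ioi x, f t)) :=
    intervalIntegral_tendsto_integral_Ioi x hint.integrableOn tendsto_id
  have hIoi : (∫ t in Ioi x, f t) ≤ B x :=
    le_of_tendsto htend (eventually_atTop.mpr ⟨x, key⟩)
  have hsplit : (∫ t in Iic x, f t) + (∫ t in Ioi x, f t) = 1 := by
    rw [← htot]
    exact intervalIntegral.integral_Iic_add_Ioi hint.integrableOn hint.integrableOn
  have hgoal : 1 - (∫ t in Iic x, f t) ≤ B x := by linarith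
  calc 1 - (∫ t in Iic x, f t) ≤ B x := hgoal
    _ = _ := by rw [hBdef]
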